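/- Let α be a real number with 0 < α < π, set k₊ = −(2π−α)/α and k₋ = −α/(2π−α), and let k be a real number with k₊ < k < k₋ and k ≠ −1. Then there exists a unique real ξ > 0 such that F̃(ξ,α) = 2k/(k² + 1). -/

import Mathlib

open Real

/-- The hyperbolic dispersion function of the corner transmission problem. -/
noncomputable def Ftilde (ξ α : ℝ) : ℝ :=
  Real.sinh (α * ξ) * Real.sinh ((2 * Real.pi - α) * ξ) /
    (1 - Real.cosh (α * ξ) * Real.cosh ((2 * Real.pi - α) * ξ))

/-- For positive `x`, `sinh x < x * cosh x`. -/
lemma aux_sinh_lt_mul_cosh {x : ℝ} (hx : 0 < x) : Real.sinh x < x * Real.cosh x := by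
  have h : StrictMonoOn (fun t : ℝ => t * Real.cosh t - Real.sinh t) (Set.Ici 0) := by
    apply strictMonoOn_of_deriv_pos (convex_Ici 0)
    · exact ((continuous_id.mul Real.continuous_cosh).sub Real.continuous_sinh).continuousOn
    · intro t ht
      rw [interior_Ici, Set.mem_Ioi] at ht
      have h1 : HasDerivAt (fun t : ℝ => t * Real.cosh t - Real.sinh t)
          (1 * Real.cosh t + t * Real.sinh t - Real.cosh t) t :=
        ((hasDerivAt_id t).mul (Real.hasDerivAt_cosh t)).sub (Real.hasDerivAt_sinh t)
      rw [h1.deriv]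
      have h2 : 0 < Real.sinh t := Real.sinh_pos_iff.2 ht
      nlinarith
  have := h (Set.self_mem_Ici) (Set.mem_Ici.2 hx.le) hx
  simpa using this

/-- `sinh t / t` is increasing: for `0 < b < a`, `a * sinh b < b * sinh a`. -/
lemma aux_sinh_div_mono {b a : ℝ} (hb : 0 < b) (hba : b < a) :
    a * Real.sinh b < b * Real.sinh a := by
  have h : StrictMonoOn (fun t : ℝ => b * Real.sinh t - Real.sinh b * t) (Set.Ici b) := by
    apply strictMonoOn_of_deriv_pos (convex_Ici b)
    · exact ((continuous_const.mul Real.continuous_sinh).sub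
        (continuous_const.mul continuous_id)).continuousOn
    · intro t ht
      rw [interior_Ici, Set.mem_Ioi] at ht
      have h1 : HasDerivAt (fun t : ℝ => b * Real.sinh t - Real.sinh b * t)
          (b * Real.cosh t - Real.sinh b * 1) t :=
        ((Real.hasDerivAt_sinh t).const_mul b).sub ((hasDerivAt_id t).const_mul (Real.sinh b))
      rw [h1.deriv]
      have h2 : Real.cosh b < Real.cosh t := by
        rw [Real.cosh_lt_cosh, abs_of_pos hb, abs_of_pos (hb.trans ht)]; exact ht
      have h3 := aux_sinh_lt_mul_cosh hb
      nlinarith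
  have := h (Set.self_mem_Ici) (Set.mem_Ici.2 hba.le) hba
  simp only [sub_lt_sub_iff] at this
  nlinarith [this]

/-- The ratio `sinh (m x) / sinh (n x)` is strictly increasing on `(0,∞)` when `0 < n < m`. -/
lemma aux_ratio_strictMono {n m : ℝ} (hn : 0 < n) (hnm : n < m) :
    StrictMonoOn (fun x : ℝ => Real.sinh (m * x) / Real.sinh (n * x)) (Set.Ioi 0) := by
  apply strictMonoOn_of_deriv_pos (convex_Ioi 0)
  · apply ContinuousOn.div
    · exact (Real.continuous_sinh.comp (continuous_const.mul continuous_id)).continuousOn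
    · exact (Real.continuous_sinh.comp (continuous_const.mul continuous_id)).continuousOn
    · intro x hx
      exact Real.sinh_ne_zero.2 (mul_pos hn (Set.mem_Ioi.1 hx)).ne'
  · intro x hx
    rw [interior_Ioi, Set.mem_Ioi] at hx
    have hs : Real.sinh (n * x) ≠ 0 := Real.sinh_ne_zero.2 (mul_pos hn hx).ne'
    have hm : HasDerivAt (fun x : ℝ => Real.sinh (m * x)) (Real.cosh (m * x) * m) x := by
      simpa [Function.comp_def] using (Real.hasDerivAt_sinh (m * x)).comp x ((hasDerivAt_id x).const_mul m)
    have hn' : HasDerivAt (fun x : ℝ => Real.sinh (n * x)) (Real.cosh (n * x) * n) x := by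
      simpa [Function.comp_def] using (Real.hasDerivAt_sinh (n * x)).comp x ((hasDerivAt_id x).const_mul n)
    have hd := hm.div hn' hs
    rw [show (fun x : ℝ => Real.sinh (m * x) / Real.sinh (n * x)) =
      ((fun x : ℝ => Real.sinh (m * x)) / fun x : ℝ => Real.sinh (n * x)) from rfl, hd.deriv]
    apply div_pos
    · have hb : 0 < (m - n) * x := mul_pos (sub_pos.2 hnm) hx
      have hba : (m - n) * x < (m + n) * x := by nlinarith
      have key := aux_sinh_div_mono hb hba
      rw [show (m + n) * x = m * x + n * x by ring, show (m - n) * x = m * x - n * x by ring,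
        Real.sinh_add, Real.sinh_sub] at key
      nlinarith [key, hx]
    · positivity

/-- Algebraic reduction of `Ftilde` in terms of `sinh (π ξ)` and `sinh ((π - α) ξ)`. -/
lemma Ftilde_eq (α ξ : ℝ) :
    Ftilde ξ α = (Real.sinh ((Real.pi - α) * ξ) ^ 2 - Real.sinh (Real.pi * ξ) ^ 2) /
      (Real.sinh (Real.pi * ξ) ^ 2 + Real.sinh ((Real.pi - α) * ξ) ^ 2) := by
  unfold Ftilde
  have e1 : α * ξ = Real.pi * ξ - (Real.pi - α) * ξ := by ring
  have e2 : (2 * Real.pi - α) * ξ = Real.pi * ξ + (Real.pi - α) * ξ := by ring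
  rw [e1, e2, Real.sinh_sub, Real.sinh_add, Real.cosh_sub, Real.cosh_add]
  have hcm := Real.cosh_sq (Real.pi * ξ)
  have hcn := Real.cosh_sq ((Real.pi - α) * ξ)
  have hnum : (Real.sinh (Real.pi * ξ) * Real.cosh ((Real.pi - α) * ξ) -
        Real.cosh (Real.pi * ξ) * Real.sinh ((Real.pi - α) * ξ)) *
      (Real.sinh (Real.pi * ξ) * Real.cosh ((Real.pi - α) * ξ) +
        Real.cosh (Real.pi * ξ) * Real.sinh ((Real.pi - α) * ξ)) =
      Real.sinh (Real.pi * ξ) ^ 2 - Real.sinh ((Real.pi - α) * ξ) ^ 2 := by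
    linear_combination Real.sinh (Real.pi * ξ) ^ 2 * hcn - Real.sinh ((Real.pi - α) * ξ) ^ 2 * hcm
  have hden : 1 - (Real.cosh (Real.pi * ξ) * Real.cosh ((Real.pi - α) * ξ) -
        Real.sinh (Real.pi * ξ) * Real.sinh ((Real.pi - α) * ξ)) *
      (Real.cosh (Real.pi * ξ) * Real.cosh ((Real.pi - α) * ξ) +
        Real.sinh (Real.pi * ξ) * Real.sinh ((Real.pi - α) * ξ)) =
      -(Real.sinh (Real.pi * ξ) ^ 2 + Real.sinh ((Real.pi - α) * ξ) ^ 2) := by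
    linear_combination (-(Real.cosh ((Real.pi - α) * ξ) ^ 2)) * hcm +
      (-(Real.sinh (Real.pi * ξ) ^ 2) - 1) * hcn
  rw [hnum, hden, div_neg, ← neg_div, neg_sub]

set_option maxHeartbeats 1600000 in
theorem hyperbolic_dispersion_solvable_inside_critical
    (α : ℝ) (hα0 : 0 < α) (hαπ : α < Real.pi)
    (k : ℝ) (hkp : -(2 * Real.pi - α) / α < k) (hkm : k < -α / (2 * Real.pi - α))
    (hk1 : k ≠ -1) :
    ∃! ξ : ℝ, 0 < ξ ∧ Ftilde ξ α = 2 * k / (k ^ 2 + 1) := by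
  have hπ := Real.pi_pos
  have hn : (0:ℝ) < Real.pi - α := by linarith
  have hb : (0:ℝ) < 2 * Real.pi - α := by linarith
  set t := 2 * k / (k ^ 2 + 1) with htdef
  have hden : (0:ℝ) < k ^ 2 + 1 := by positivity
  -- inequalities on k
  have hkp2 : -(2 * Real.pi - α) < k * α := (div_lt_iff₀ hα0).1 hkp
  have hkm2 : k * (2 * Real.pi - α) < -α := by
    have h := mul_lt_mul_of_pos_right hkm hb
    rwa [div_mul_cancel₀ _ hb.ne'] at h
  have hk1' : k + 1 ≠ 0 := fun h => hk1 (by linarith)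
  have h0 : 0 < (k + 1) ^ 2 := by rcases hk1'.lt_or_gt with h | h <;> nlinarith
  -- bounds on t
  have ht1 : -1 < t := by rw [htdef, lt_div_iff₀ hden]; nlinarith
  have ht1' : (0:ℝ) < 1 + t := by linarith
  have hmn2 : (0:ℝ) < Real.pi ^ 2 + (Real.pi - α) ^ 2 := by positivity
  have ht2 : t < ((Real.pi - α) ^ 2 - Real.pi ^ 2) / (Real.pi ^ 2 + (Real.pi - α) ^ 2) := by
    rw [htdef, div_lt_div_iff₀ hden hmn2]
    nlinarith [mul_pos (show (0:ℝ) < k * α + (2 * Real.pi - α) by linarith)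
      (show (0:ℝ) < -(k * (2 * Real.pi - α)) - α by linarith)]
  have htneg : t < 0 :=
    lt_trans ht2 (div_neg_of_neg_of_pos (by nlinarith) hmn2)
  have ht1m : (0:ℝ) < 1 - t := by linarith
  -- the target ratio r
  set r := Real.sqrt ((1 - t) / (1 + t)) with hrdef
  have hrq : (0:ℝ) < (1 - t) / (1 + t) := div_pos ht1m ht1'
  have hrr : r ^ 2 = (1 - t) / (1 + t) := Real.sq_sqrt hrq.le
  have hr0 : 0 < r := Real.sqrt_pos.2 hrq
  have hrmn : Real.pi / (Real.pi - α) < r := by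
    rw [hrdef]
    rw [Real.lt_sqrt (div_pos hπ hn).le]
    rw [div_pow, div_lt_div_iff₀ (pow_pos hn 2) ht1']
    have := (lt_div_iff₀ hmn2).1 ht2
    nlinarith [this]
  have hrn : Real.pi < r * (Real.pi - α) := (div_lt_iff₀ hn).1 hrmn
  clear_value t r
  -- key equivalence
  have key : ∀ ξ : ℝ, 0 < ξ →
      (Ftilde ξ α = t ↔ Real.sinh (Real.pi * ξ) / Real.sinh ((Real.pi - α) * ξ) = r) := by
    intro ξ hξ
    have hsm : 0 < Real.sinh (Real.pi * ξ) := Real.sinh_pos_iff.2 (mul_pos hπ hξ)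
    have hsn : 0 < Real.sinh ((Real.pi - α) * ξ) := Real.sinh_pos_iff.2 (mul_pos hn hξ)
    rw [Ftilde_eq]
    have hsum0 : Real.sinh (Real.pi * ξ) ^ 2 + Real.sinh ((Real.pi - α) * ξ) ^ 2 ≠ 0 := by
      nlinarith [pow_pos hsm 2, pow_pos hsn 2]
    constructor
    · intro h
      rw [div_eq_iff hsum0] at h
      have h3 : (Real.sinh (Real.pi * ξ) / Real.sinh ((Real.pi - α) * ξ)) ^ 2 =
          (1 - t) / (1 + t) := by
        rw [div_pow, div_eq_div_iff (pow_pos hsn 2).ne' ht1'.ne']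
        linear_combination (-1 : ℝ) * h
      rw [← Real.sqrt_sq (le_of_lt (div_pos hsm hsn)), h3, ← hrdef]
    · intro h
      rw [div_eq_iff hsn.ne'] at h
      rw [h]
      have hsum : (0:ℝ) < (r * Real.sinh ((Real.pi - α) * ξ)) ^ 2 +
          Real.sinh ((Real.pi - α) * ξ) ^ 2 := by
        nlinarith [pow_pos hsn 2, sq_nonneg (r * Real.sinh ((Real.pi - α) * ξ))]
      rw [div_eq_iff hsum.ne']
      have h4 : (1 + t) * r ^ 2 = 1 - t := by
        rw [hrr]; field_simp
      linear_combination (-(Real.sinh ((Real.pi - α) * ξ) ^ 2)) * h4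
    -- small point
  have hcosh_small : ∃ δ > 0, ∀ x : ℝ, |x| < δ →
      Real.cosh (Real.pi * x) < r * (Real.pi - α) / Real.pi := by
    have hc : Filter.Tendsto (fun x : ℝ => Real.cosh (Real.pi * x)) (nhds 0)
        (nhds 1) := by
      have h1 : Continuous fun x : ℝ => Real.cosh (Real.pi * x) :=
        Real.continuous_cosh.comp (continuous_const.mul continuous_id)
      have h2 := h1.continuousAt (x := (0:ℝ))
      simpa [ContinuousAt] using h2
    have hlt : (1:ℝ) < r * (Real.pi - α) / Real.pi := by
      rw [lt_div_iff₀ hπ]; linarith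
    have hev := hc.eventually_lt_const hlt
    rw [Metric.eventually_nhds_iff] at hev
    obtain ⟨δ, hδ0, hδ⟩ := hev
    exact ⟨δ, hδ0, fun x hx => hδ (by simpa [Real.dist_eq] using hx)⟩
  obtain ⟨δ, hδ0, hδ⟩ := hcosh_small
  set ξ₁ := δ / 2 with hξ₁def
  have hξ₁ : 0 < ξ₁ := by rw [hξ₁def]; exact half_pos hδ0
  have hξ₁δ : ξ₁ < δ := by rw [hξ₁def]; linarith
  clear_value ξ₁
  have hsn1 : 0 < Real.sinh ((Real.pi - α) * ξ₁) := Real.sinh_pos_iff.2 (mul_pos hn hξ₁)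
  have h5 : Real.sinh (Real.pi * ξ₁) / Real.sinh ((Real.pi - α) * ξ₁) < r := by
    have hcosh := hδ ξ₁ (by rw [abs_of_pos hξ₁]; exact hξ₁δ)
    have l1 := aux_sinh_lt_mul_cosh (mul_pos hπ hξ₁)
    have l2 : (Real.pi - α) * ξ₁ ≤ Real.sinh ((Real.pi - α) * ξ₁) :=
      Real.self_le_sinh_iff.2 (mul_pos hn hξ₁).le
    rw [div_lt_iff₀ hsn1]
    have h6 : Real.pi * ξ₁ * Real.cosh (Real.pi * ξ₁) <
        Real.pi * ξ₁ * (r * (Real.pi - α) / Real.pi) :=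
      mul_lt_mul_of_pos_left hcosh (mul_pos hπ hξ₁)
    have he : Real.pi * ξ₁ * (r * (Real.pi - α) / Real.pi) = r * ((Real.pi - α) * ξ₁) := by
      field_simp
    rw [he] at h6
    linarith [mul_le_mul_of_nonneg_left l2 hr0.le]
  -- big point
  set ξ₂ := ξ₁ + (r + 1) / α with hξ₂def
  have hξ₁₂ : ξ₁ < ξ₂ := by
    rw [hξ₂def]
    exact lt_add_of_pos_right _ (div_pos (by linarith) hα0)
  have he2 : α * ξ₂ = α * ξ₁ + (r + 1) := by
    rw [hξ₂def]; field_simp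
  clear_value ξ₂
  have hξ₂pos : 0 < ξ₂ := hξ₁.trans hξ₁₂
  have hsn2 : 0 < Real.sinh ((Real.pi - α) * ξ₂) := Real.sinh_pos_iff.2 (mul_pos hn hξ₂pos)
  have h7 : r < Real.sinh (Real.pi * ξ₂) / Real.sinh ((Real.pi - α) * ξ₂) := by
    have haξ : r + 1 < α * ξ₂ := by
      rw [he2]; linarith [mul_pos hα0 hξ₁]
    have hcgt : r < Real.cosh (α * ξ₂) := by
      have h8 : α * ξ₂ < Real.sinh (α * ξ₂) := Real.self_lt_sinh_iff.2 (mul_pos hα0 hξ₂pos)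
      have h9 : Real.sinh (α * ξ₂) < Real.cosh (α * ξ₂) := by
        nlinarith [Real.cosh_sub_sinh (α * ξ₂), Real.exp_pos (-(α * ξ₂))]
      linarith
    rw [lt_div_iff₀ hsn2, show Real.pi * ξ₂ = (Real.pi - α) * ξ₂ + α * ξ₂ by ring,
      Real.sinh_add]
    have hsa : 0 < Real.sinh (α * ξ₂) := Real.sinh_pos_iff.2 (mul_pos hα0 hξ₂pos)
    have f1 := mul_lt_mul_of_pos_left hcgt hsn2
    have f2 : 0 < Real.cosh ((Real.pi - α) * ξ₂) * Real.sinh (α * ξ₂) :=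
      mul_pos (Real.cosh_pos _) hsa
    linarith [f1, f2]
  -- IVT
  have hcont : ContinuousOn
      (fun x : ℝ => Real.sinh (Real.pi * x) / Real.sinh ((Real.pi - α) * x))
      (Set.Icc ξ₁ ξ₂) := by
    apply ContinuousOn.div
    · exact (Real.continuous_sinh.comp (continuous_const.mul continuous_id)).continuousOn
    · exact (Real.continuous_sinh.comp (continuous_const.mul continuous_id)).continuousOn
    · intro x hx
      exact Real.sinh_ne_zero.2 (mul_pos hn (hξ₁.trans_le hx.1)).ne'
  obtain ⟨ξ, hξmem, hξeq⟩ := intermediate_value_Icc hξ₁₂.le hcont ⟨h5.le, h7.le⟩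
  have hξpos : 0 < ξ := hξ₁.trans_le hξmem.1
  have hξeq' : Real.sinh (Real.pi * ξ) / Real.sinh ((Real.pi - α) * ξ) = r := hξeq
  refine ⟨ξ, ⟨hξpos, (key ξ hξpos).2 hξeq'⟩, ?_⟩
  intro y hy
  have h1 : Real.sinh (Real.pi * y) / Real.sinh ((Real.pi - α) * y) =
      Real.sinh (Real.pi * ξ) / Real.sinh ((Real.pi - α) * ξ) := by
    rw [(key y hy.1).1 hy.2]; exact hξeq'.symm
  exact (aux_ratio_strictMono hn (by linarith : Real.pi - α < Real.pi)).injOn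
    (Set.mem_Ioi.2 hy.1) (Set.mem_Ioi.2 hξpos) h1
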